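/- Let A ∈ ℝ^{m×n} and let R : ℝ^n → ℝ ∪ {+∞} be proper and lower semicontinuous with R non-negative and Ker(R_∞) ∩ Ker(A) = {0}, where R_∞ is the asymptotic function of R. Then for every λ > 0 and every y ∈ ℝ^m, the set of minimizers of F_{y,λ}(x) = ‖y − |Ax|²‖₂² + λ R(x) over x ∈ ℝ^n is non-empty and compact. -/

import Mathlib

open MeasureTheory ProbabilityTheory Filter
open scoped NNReal ENNReal BigOperators

noncomputable section

/-- The Euclidean (`ℓ²`) norm on `Fin n → ℝ`. -/
def enorm2 {n : ℕ} (x : Fin n → ℝ) : ℝ := Real.sqrt (∑ i, x i ^ 2)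

/-- Matrix-vector multiplication for `A ∈ ℝ^{m×n}`. -/
def mulVec' {m n : ℕ} (A : Fin m → Fin n → ℝ) (x : Fin n → ℝ) : Fin m → ℝ :=
  fun i => ∑ j, A i j * x j

/-- The asymptotic (recession) function `R_∞(z) = liminf_{z'→z, t→∞} R(t z')/t`. -/
def asympFun {n : ℕ} (R : (Fin n → ℝ) → EReal) (z : Fin n → ℝ) : EReal :=
  Filter.liminf (fun p : (Fin n → ℝ) × ℝ => R (p.2 • p.1) * ((p.2⁻¹ : ℝ) : EReal))
    ((nhds z) ×ˢ Filter.atTop)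

/-- The noiseless feasible set `{x : |Ax| = √ȳ entrywise}`. -/
def feasSet {m n : ℕ} (A : Fin m → Fin n → ℝ) (ybar : Fin m → ℝ) : Set (Fin n → ℝ) :=
  {x | ∀ r, |mulVec' A x r| = Real.sqrt (ybar r)}

/-- Set of minimizers of `R` over `S`. -/
def argminOn {α β : Type*} [Preorder β] (R : α → β) (S : Set α) : Set α :=
  {x ∈ S | ∀ z ∈ S, R x ≤ R z}

/-- Convexity for `EReal`-valued functions. -/
def ERealConvex {n : ℕ} (R : (Fin n → ℝ) → EReal) : Prop :=
  ∀ x y : Fin n → ℝ, ∀ a b : ℝ, 0 ≤ a → 0 ≤ b → a + b = 1 →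
    R (a • x + b • y) ≤ (a : EReal) * R x + (b : EReal) * R y

/-- Descent cone of `R` at `x̄`. -/
def descentCone {n : ℕ} {β : Type*} [Preorder β] (R : (Fin n → ℝ) → β)
    (xbar : Fin n → ℝ) : Set (Fin n → ℝ) :=
  {z | ∃ t : ℝ, 0 < t ∧ R (xbar + t • z) ≤ R xbar}

/-- Euclidean unit sphere of `ℝⁿ`. -/
def unitSphere (n : ℕ) : Set (Fin n → ℝ) := {x | enorm2 x = 1}

/-- The constant ν = (1/18)√(π/2). -/
def nu : ℝ := (1 / 18) * Real.sqrt (Real.pi / 2)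

/-- Law of a random `m × n` matrix with i.i.d. `N(0, 1/m)` entries. -/
def gaussMatrix (m n : ℕ) : Measure (Fin m → Fin n → ℝ) :=
  Measure.pi fun _ => Measure.pi fun _ => gaussianReal 0 (m : ℝ≥0)⁻¹

/-- Standard Gaussian vector `N(0, Id_n)`. -/
def gaussVec (n : ℕ) : Measure (Fin n → ℝ) := Measure.pi fun _ => gaussianReal 0 1

/-- Dot product. -/
def dot {n : ℕ} (x y : Fin n → ℝ) : ℝ := ∑ i, x i * y i

/-- Gaussian width of S. -/
def gaussianWidth {n : ℕ} (S : Set (Fin n → ℝ)) : ℝ :=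
  ∫ z, sSup ((fun x => dot z x) '' S) ∂(gaussVec n)

/-- `‖A^I x‖₂` : ℓ² norm of the rows of `Ax` indexed by `I`. -/
def rowNorm {m n : ℕ} (A : Fin m → Fin n → ℝ) (I : Finset (Fin m)) (x : Fin n → ℝ) : ℝ :=
  Real.sqrt (∑ i ∈ I, (mulVec' A x i) ^ 2)

/-- Covering number `N(S, δ)` by Euclidean balls of radius `δ` centered in `S`. -/
def coveringNumber {n : ℕ} (S : Set (Fin n → ℝ)) (δ : ℝ) : ℕ :=
  sInf {k : ℕ | ∃ T : Finset (Fin n → ℝ), T.card = k ∧ ↑T ⊆ S ∧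
    S ⊆ ⋃ c ∈ T, {x | enorm2 (x - c) ≤ δ}}

/-- Constrained (Mozorov) feasible set `{x : ‖y − |Ax|²‖₂ ≤ ρ}`. -/
def feasConst {m n : ℕ} (A : Fin m → Fin n → ℝ) (y : Fin m → ℝ) (ρ : ℝ) :
    Set (Fin n → ℝ) :=
  {x | enorm2 (fun i => y i - (mulVec' A x i) ^ 2) ≤ ρ}

/-- Penalized (Tikhonov) objective `F_{y,λ}(x) = ‖y − |Ax|²‖₂² + λ R(x)`. -/
def Fpen {m n : ℕ} (A : Fin m → Fin n → ℝ) (y : Fin m → ℝ) (lam : ℝ)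
    (R : (Fin n → ℝ) → EReal) (x : Fin n → ℝ) : EReal :=
  ((enorm2 (fun i => y i - (mulVec' A x i) ^ 2) ^ 2 : ℝ) : EReal) + (lam : EReal) * R x


open Topology

lemma enorm2_sq {n : ℕ} (v : Fin n → ℝ) : enorm2 v ^ 2 = ∑ i, v i ^ 2 :=
  Real.sq_sqrt (by positivity)

lemma cont_mulVec' {m n : ℕ} (A : Fin m → Fin n → ℝ) (i : Fin m) :
    Continuous fun x : Fin n → ℝ => mulVec' A x i := by
  unfold mulVec'; fun_prop

lemma mulVec'_smul {m n : ℕ} (A : Fin m → Fin n → ℝ) (a : ℝ) (x : Fin n → ℝ) (i : Fin m) :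
    mulVec' A (a • x) i = a * mulVec' A x i := by
  unfold mulVec'; rw [Finset.mul_sum]; apply Finset.sum_congr rfl; intro j _
  simp [Pi.smul_apply, smul_eq_mul]; ring

-- basic bounds from F x ≤ c
lemma Fpen_bounds {m n : ℕ} (A : Fin m → Fin n → ℝ) (y : Fin m → ℝ) {lam : ℝ} (hlam : 0 < lam)
    (R : (Fin n → ℝ) → EReal) (hRnonneg : ∀ x, 0 ≤ R x) {c : ℝ} {x : Fin n → ℝ}
    (hx : Fpen A y lam R x ≤ (c : EReal)) :
    R x ≤ ((c / lam : ℝ) : EReal) ∧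
      ∀ i, |mulVec' A x i| ≤ Real.sqrt ((∑ j, |y j|) + Real.sqrt (max c 0)) := by
  have hterm1 : (0 : EReal) ≤ ((enorm2 (fun i => y i - (mulVec' A x i) ^ 2) ^ 2 : ℝ) : EReal) := by
    exact EReal.coe_nonneg.2 (sq_nonneg _)
  have hterm2 : (0 : EReal) ≤ (lam : EReal) * R x :=
    mul_nonneg (by exact_mod_cast hlam.le) (hRnonneg x)
  have h1 : ((enorm2 (fun i => y i - (mulVec' A x i) ^ 2) ^ 2 : ℝ) : EReal) ≤ (c : EReal) :=
    le_trans (le_add_of_nonneg_right hterm2) hx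
  have h2 : (lam : EReal) * R x ≤ (c : EReal) :=
    le_trans (le_add_of_nonneg_left hterm1) hx
  constructor
  · rw [EReal.coe_div, EReal.le_div_iff_mul_le (by exact_mod_cast hlam) (by simp), mul_comm]
    exact h2
  · intro i
    have hq : enorm2 (fun i => y i - (mulVec' A x i) ^ 2) ^ 2 ≤ c := by exact_mod_cast h1
    rw [enorm2_sq] at hq
    have hi : (y i - (mulVec' A x i) ^ 2) ^ 2 ≤ c :=
      le_trans (Finset.single_le_sum (f := fun j => (y j - (mulVec' A x j) ^ 2) ^ 2)
        (fun j _ => sq_nonneg _) (Finset.mem_univ i)) hq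
    have habs : |y i - (mulVec' A x i) ^ 2| ≤ Real.sqrt (max c 0) := by
      rw [← Real.sqrt_sq_eq_abs]
      exact Real.sqrt_le_sqrt (le_trans hi (le_max_left _ _))
    have hsq : (mulVec' A x i) ^ 2 ≤ (∑ j, |y j|) + Real.sqrt (max c 0) := by
      have h3 : (mulVec' A x i) ^ 2 ≤ |y i| + |y i - (mulVec' A x i) ^ 2| := by
        have h4 := le_abs_self ((mulVec' A x i) ^ 2 - y i)
        rw [abs_sub_comm] at h4
        have h6 := le_abs_self (y i)
        linarith
      have h5 : |y i| ≤ ∑ j, |y j| :=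
        Finset.single_le_sum (f := fun j => |y j|) (fun j _ => abs_nonneg _) (Finset.mem_univ i)
      linarith
    rw [← Real.sqrt_sq_eq_abs]
    exact Real.sqrt_le_sqrt hsq

lemma sublevel_bounded {m n : ℕ} (A : Fin m → Fin n → ℝ) (y : Fin m → ℝ)
    (R : (Fin n → ℝ) → EReal)
    (hRlsc : LowerSemicontinuous R) (hRnonneg : ∀ x, 0 ≤ R x)
    (hker : {z : Fin n → ℝ | asympFun R z = 0} ∩ {z | mulVec' A z = 0} = {0})
    {lam : ℝ} (hlam : 0 < lam) (c : ℝ) :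
    Bornology.IsBounded {x | Fpen A y lam R x ≤ (c : EReal)} := by
  by_contra hb
  rw [isBounded_iff_forall_norm_le] at hb
  push_neg at hb
  choose x hxS hxn using fun k : ℕ => hb ((k : ℝ) + 1)
  set B : ℝ := (∑ j, |y j|) + Real.sqrt (max c 0) with hB
  have hbounds := fun k => Fpen_bounds A y hlam R hRnonneg (hxS k)
  set t : ℕ → ℝ := fun k => ‖x k‖ with ht
  have htpos : ∀ k, 0 < t k := fun k => lt_of_le_of_lt (by positivity) (hxn k)
  have htk : ∀ k : ℕ, (k : ℝ) ≤ t k := fun k => le_of_lt (lt_of_le_of_lt (by linarith) (hxn k))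
  set z : ℕ → (Fin n → ℝ) := fun k => (t k)⁻¹ • x k with hzdef
  have hzs : ∀ k, z k ∈ Metric.sphere (0 : Fin n → ℝ) 1 := by
    intro k
    rw [mem_sphere_zero_iff_norm, norm_smul, norm_inv, Real.norm_eq_abs,
      abs_of_pos (htpos k)]
    exact inv_mul_cancel₀ (htpos k).ne'
  obtain ⟨zi, hziS, φ, hφ, hzt⟩ := (isCompact_sphere (0 : Fin n → ℝ) 1).tendsto_subseq hzs
  have htφ : Tendsto (fun k => t (φ k)) atTop atTop := by
    apply tendsto_atTop_mono (fun k => le_trans (Nat.cast_le.2 (hφ.le_apply)) (htk (φ k)))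
    exact tendsto_natCast_atTop_atTop
  -- A zi = 0
  have hAz : mulVec' A zi = 0 := by
    funext r
    have hc1 : Tendsto (fun k => mulVec' A (z (φ k)) r) atTop (𝓝 (mulVec' A zi r)) :=
      ((cont_mulVec' A r).tendsto zi).comp hzt
    have hc0 : Tendsto (fun k => mulVec' A (z (φ k)) r) atTop (𝓝 0) := by
      apply squeeze_zero_norm (a := fun k => (t (φ k))⁻¹ * Real.sqrt B)
      · intro k
        rw [hzdef, Real.norm_eq_abs, mulVec'_smul, abs_mul, abs_of_pos (inv_pos.2 (htpos (φ k)))]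
        exact mul_le_mul_of_nonneg_left ((hbounds (φ k)).2 r) (le_of_lt (inv_pos.2 (htpos (φ k))))
      · have := (htφ.inv_tendsto_atTop).mul_const (Real.sqrt B)
        simpa using this
    exact tendsto_nhds_unique hc1 hc0
  -- asympFun R zi = 0
  have hasymp : asympFun R zi = 0 := by
    apply le_antisymm
    · set u : (Fin n → ℝ) × ℝ → EReal :=
        fun p => R (p.2 • p.1) * ((p.2⁻¹ : ℝ) : EReal) with hu
      set g : ℕ → (Fin n → ℝ) × ℝ := fun k => (z (φ k), t (φ k)) with hg
      have hgt : Tendsto g atTop ((𝓝 zi) ×ˢ atTop) := hzt.prodMk htφ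
      have h1 : asympFun R zi ≤ liminf (u ∘ g) atTop := by
        rw [Filter.liminf_comp]
        exact liminf_le_liminf_of_le hgt
      refine le_trans h1 ?_
      have hv : Tendsto (fun k => (((c / lam) * (t (φ k))⁻¹ : ℝ) : EReal)) atTop (𝓝 0) := by
        have hr : Tendsto (fun k => (c / lam) * (t (φ k))⁻¹) atTop (𝓝 0) := by
          have := (htφ.inv_tendsto_atTop).const_mul (c / lam)
          simpa using this
        have := (continuous_coe_real_ereal.tendsto 0).comp hr
        simpa [Function.comp_def] using this
      have hle : ∀ k, (u ∘ g) k ≤ (((c / lam) * (t (φ k))⁻¹ : ℝ) : EReal) := by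
        intro k
        have hsm : (t (φ k)) • z (φ k) = x (φ k) := by
          rw [hzdef, smul_smul, mul_inv_cancel₀ (htpos (φ k)).ne', one_smul]
        show R ((t (φ k)) • z (φ k)) * (((t (φ k))⁻¹ : ℝ) : EReal) ≤ _
        rw [hsm, EReal.coe_mul]
        exact mul_le_mul_of_nonneg_right (hbounds (φ k)).1
          (EReal.coe_nonneg.2 (le_of_lt (inv_pos.2 (htpos (φ k)))))
      calc liminf (u ∘ g) atTop
          ≤ liminf (fun k => (((c / lam) * (t (φ k))⁻¹ : ℝ) : EReal)) atTop :=
            liminf_le_liminf (Eventually.of_forall hle)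
        _ = 0 := hv.liminf_eq
    · refine le_liminf_of_le Filter.isCobounded_ge_of_top ?_
      have hev : ∀ᶠ p : (Fin n → ℝ) × ℝ in (𝓝 zi) ×ˢ atTop, (1 : ℝ) ≤ p.2 :=
        Eventually.prod_inr (eventually_ge_atTop 1) _
      refine hev.mono fun p hp => ?_
      exact mul_nonneg (hRnonneg _) (EReal.coe_nonneg.2 (inv_nonneg.2 (by linarith)))
  have hzi0 : zi = (0 : Fin n → ℝ) := by
    have : zi ∈ ({0} : Set (Fin n → ℝ)) := by
      rw [← hker]; exact ⟨hasymp, hAz⟩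
    simpa using this
  have := mem_sphere_zero_iff_norm.1 hziS
  rw [hzi0, norm_zero] at this
  exact one_ne_zero this.symm

lemma lsc_lamR {n : ℕ} (R : (Fin n → ℝ) → EReal) (hRlsc : LowerSemicontinuous R)
    {lam : ℝ} (hlam : 0 < lam) :
    LowerSemicontinuous fun x => (lam : EReal) * R x := by
  rw [lowerSemicontinuous_iff_isClosed_preimage]
  intro c
  have : (fun x => (lam : EReal) * R x) ⁻¹' Set.Iic c = R ⁻¹' Set.Iic (c / (lam : EReal)) := by
    ext x
    simp only [Set.mem_preimage, Set.mem_Iic]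
    rw [EReal.le_div_iff_mul_le (by exact_mod_cast hlam) (by simp), mul_comm]
  rw [this]
  exact lowerSemicontinuous_iff_isClosed_preimage.1 hRlsc _

lemma cont_q {m n : ℕ} (A : Fin m → Fin n → ℝ) (y : Fin m → ℝ) :
    Continuous fun x : Fin n → ℝ => enorm2 (fun i => y i - (mulVec' A x i) ^ 2) ^ 2 := by
  have : (fun x : Fin n → ℝ => enorm2 (fun i => y i - (mulVec' A x i) ^ 2) ^ 2)
      = fun x => ∑ i, (y i - (mulVec' A x i) ^ 2) ^ 2 := by
    funext x; exact enorm2_sq _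
  rw [this]
  exact continuous_finset_sum _ fun i _ =>
    ((continuous_const.sub ((cont_mulVec' A i).pow 2)).pow 2)

lemma lsc_Fpen {m n : ℕ} (A : Fin m → Fin n → ℝ) (y : Fin m → ℝ) {lam : ℝ} (hlam : 0 < lam)
    (R : (Fin n → ℝ) → EReal) (hRlsc : LowerSemicontinuous R) (hRbot : ∀ x, R x ≠ ⊥) :
    LowerSemicontinuous (Fpen A y lam R) := by
  apply LowerSemicontinuous.add'
  · exact (continuous_coe_real_ereal.comp (cont_q A y)).lowerSemicontinuous
  · exact lsc_lamR R hRlsc hlam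
  · intro x
    apply EReal.continuousAt_add
    · left; exact EReal.coe_ne_top _
    · left; exact EReal.coe_ne_bot _


/-- existence and compactness of the set of minimizers of the penalized
(Tikhonov) phase retrieval problem, for every `λ > 0` and every `y`. -/
theorem statement14 {m n : ℕ} (A : Fin m → Fin n → ℝ)
    (R : (Fin n → ℝ) → EReal)
    (hRbot : ∀ x, R x ≠ ⊥)
    (hRproper : ∃ x, R x ≠ ⊤)
    (hRlsc : LowerSemicontinuous R)
    (hRnonneg : ∀ x, 0 ≤ R x)
    (hker : {z : Fin n → ℝ | asympFun R z = 0} ∩ {z | mulVec' A z = 0} = {0}) :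
    ∀ lam : ℝ, 0 < lam → ∀ y : Fin m → ℝ,
      (argminOn (Fpen A y lam R) Set.univ).Nonempty ∧
        IsCompact (argminOn (Fpen A y lam R) Set.univ) := by
  intro lam hlam y
  classical
  obtain ⟨x₀, hx₀⟩ := hRproper
  set F := Fpen A y lam R with hF
  have hFlsc : LowerSemicontinuous F := lsc_Fpen A y hlam R hRlsc hRbot
  -- F x₀ is a real number c
  set r : ℝ := (R x₀).toReal with hr
  have hRx₀ : R x₀ = (r : EReal) := (EReal.coe_toReal hx₀ (hRbot x₀)).symm
  set c : ℝ := enorm2 (fun i => y i - (mulVec' A x₀ i) ^ 2) ^ 2 + lam * r with hc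
  have hFx₀ : F x₀ = (c : EReal) := by
    rw [hF, Fpen, hRx₀, ← EReal.coe_mul, ← EReal.coe_add]
  -- the sublevel set
  set S : Set (Fin n → ℝ) := {x | F x ≤ (c : EReal)} with hS
  have hSclosed : IsClosed S := lowerSemicontinuous_iff_isClosed_preimage.1 hFlsc _
  have hSbounded : Bornology.IsBounded S :=
    sublevel_bounded A y R hRlsc hRnonneg hker hlam c
  have hScompact : IsCompact S := Metric.isCompact_of_isClosed_isBounded hSclosed hSbounded
  have hx₀S : x₀ ∈ S := by rw [hS]; exact le_of_eq hFx₀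
  -- family of closed sets
  set t : (Fin n → ℝ) → Set (Fin n → ℝ) := fun z => {x | F x ≤ F z} with htdef
  have htclosed : ∀ z, IsClosed (t z) := fun z =>
    lowerSemicontinuous_iff_isClosed_preimage.1 hFlsc _
  have hfin : ∀ u : Finset (Fin n → ℝ), (S ∩ ⋂ z ∈ u, t z).Nonempty := by
    intro u
    set G : Finset (Fin n → ℝ) := insert x₀ (u.filter fun z => F z ≤ (c : EReal)) with hG
    obtain ⟨w, hwG, hwmin⟩ := G.exists_min_image F ⟨x₀, Finset.mem_insert_self _ _⟩
    have hwx₀ : F w ≤ (c : EReal) := by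
      rw [← hFx₀]; exact hwmin x₀ (Finset.mem_insert_self _ _)
    refine ⟨w, hwx₀, ?_⟩
    simp only [Set.mem_iInter]
    intro z hz
    by_cases hzc : F z ≤ (c : EReal)
    · exact hwmin z (Finset.mem_insert_of_mem (Finset.mem_filter.2 ⟨hz, hzc⟩))
    · exact le_trans hwx₀ (le_of_not_ge hzc)
  obtain ⟨xs, hxsS, hxsI⟩ := hScompact.inter_iInter_nonempty t htclosed hfin
  have hxsmin : ∀ z, F xs ≤ F z := by
    intro z
    exact Set.mem_iInter.1 hxsI z
  have hargmin : argminOn F Set.univ = ⋂ z, t z := by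
    ext x
    simp only [argminOn, Set.mem_setOf_eq, Set.mem_univ, true_and, Set.mem_iInter, htdef]
    constructor
    · intro h z; exact h z (Set.mem_univ z)
    · intro h z _; exact h z
  constructor
  · exact ⟨xs, ⟨Set.mem_univ xs, fun z _ => hxsmin z⟩⟩
  · have hclosed : IsClosed (argminOn F Set.univ) := by
      rw [hargmin]; exact isClosed_iInter htclosed
    have hbdd : Bornology.IsBounded (argminOn F Set.univ) := by
      apply hSbounded.subset
      intro x hx
      have := hx.2 x₀ (Set.mem_univ x₀)
      rw [hS]; rw [hFx₀] at this; exact this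
    exact Metric.isCompact_of_isClosed_isBounded hclosed hbdd


end
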